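/- Let G be a graph with degree set {1, 3} whose set of degree-1 vertices is {v₁, v₁'} with v₁ ≠ v₁' and {v₁, v₁'} ∉ E(G), and let G' be obtained from G by adding the edge {v₁, v₁'}. Then for every i ∈ ℕ the Colour Refinement partitions satisfy π^i_G = π^i_{G'}; in particular G is a long-refinement graph if and only if G' is, and G' has degree set {2, 3} with exactly v₁, v₁' of degree 2. -/

import Mathlib

variable {V : Type*}

/-- Colour Refinement equivalence: `crRel G i u v` means `u` and `v` get the same colour
after `i` iterations of Colour Refinement on `G` (starting monochromatic). -/
def crRel (G : SimpleGraph V) : ℕ → V → V → Prop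
  | 0 => fun _ _ => True
  | (i+1) => fun u v => crRel G i u v ∧ ∀ w : V,
      Nat.card {x : V // G.Adj u x ∧ crRel G i x w} =
      Nat.card {x : V // G.Adj v x ∧ crRel G i x w}

/-- The colour class of `v` after `i` iterations. -/
def crClass (G : SimpleGraph V) (i : ℕ) (v : V) : Set V :=
  {u : V | crRel G i u v}

/-- The partition `π^i` induced by the colouring after `i` iterations. -/
def crPartition (G : SimpleGraph V) (i : ℕ) : Set (Set V) :=
  {C : Set V | ∃ v : V, C = crClass G i v}

/-- `G` is a long-refinement graph: Colour Refinement takes exactly `n - 1` iterations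
to stabilise. -/
def IsLongRefinement [Fintype V] (G : SimpleGraph V) : Prop :=
  (∀ i < Fintype.card V - 1, crPartition G (i+1) ≠ crPartition G i) ∧
  crPartition G (Fintype.card V) = crPartition G (Fintype.card V - 1)

/-- The degree of a vertex. -/
noncomputable def vdeg (G : SimpleGraph V) (v : V) : ℕ :=
  Nat.card {u : V // G.Adj v u}

/-- `degOn G C C' k` : every vertex of `C` has exactly `k` neighbours in `C'`,
i.e. `deg_{C'}(C) = k`. -/
def degOn (G : SimpleGraph V) (C C' : Set V) (k : ℕ) : Prop :=
  ∀ v ∈ C, Nat.card {x : V // x ∈ C' ∧ G.Adj v x} = k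

/-- `C` is balanced with respect to `C'`: `deg_{C'}(C)` is defined. -/
def BalancedWrt (G : SimpleGraph V) (C C' : Set V) : Prop :=
  ∃ k, degOn G C C' k


open scoped Classical

lemma crCard_congr {P Q : V → Prop} (h : ∀ x, P x ↔ Q x) :
    Nat.card {x // P x} = Nat.card {x // Q x} :=
  Nat.card_congr (Equiv.subtypeEquivRight h)

lemma crRel_succ (G : SimpleGraph V) (i : ℕ) (u v : V) : crRel G (i+1) u v ↔
    crRel G i u v ∧ ∀ w : V,
      Nat.card {x : V // G.Adj u x ∧ crRel G i x w} =
      Nat.card {x : V // G.Adj v x ∧ crRel G i x w} := Iff.rfl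

lemma crRel_zero (G : SimpleGraph V) (u v : V) : crRel G 0 u v := trivial

lemma crRel_symm (G : SimpleGraph V) (i : ℕ) : ∀ {u v : V}, crRel G i u v → crRel G i v u := by
  induction i with
  | zero => intro _ _ _; trivial
  | succ i ih => intro u v h; exact ⟨ih h.1, fun w => (h.2 w).symm⟩

lemma crRel_trans (G : SimpleGraph V) (i : ℕ) :
    ∀ {u v w : V}, crRel G i u v → crRel G i v w → crRel G i u w := by
  induction i with
  | zero => intro _ _ _ _ _; trivial
  | succ i ih => intro u v w h1 h2; exact ⟨ih h1.1 h2.1, fun x => (h1.2 x).trans (h2.2 x)⟩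

lemma crRel_one_of (G : SimpleGraph V) (k : ℕ) :
    ∀ {u v : V}, crRel G (k+1) u v → crRel G 1 u v := by
  induction k with
  | zero => exact fun h => h
  | succ k ih => intro u v h; exact ih h.1

lemma card_adj_true (G : SimpleGraph V) (u w : V) :
    Nat.card {x : V // G.Adj u x ∧ crRel G 0 x w} = vdeg G u :=
  crCard_congr (fun _ => ⟨fun h => h.1, fun h => ⟨h, trivial⟩⟩)

lemma vdeg_eq_of_crRel_one (G : SimpleGraph V) (hV : Nonempty V) {u v : V}
    (h : crRel G 1 u v) : vdeg G u = vdeg G v := by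
  obtain ⟨w⟩ := hV
  have := h.2 w
  rwa [card_adj_true, card_adj_true] at this

lemma card_or_eq [Fintype V] {P : V → Prop} {a : V} (ha : ¬ P a) :
    Nat.card {x // P x ∨ x = a} = Nat.card {x // P x} + 1 := by
  have h1 : {x | P x ∨ x = a} = insert a {x | P x} := by
    ext x; simp [or_comm, Set.mem_insert_iff]
  have h2 : Nat.card {x // P x ∨ x = a} = ({x | P x ∨ x = a} : Set V).ncard :=
    Nat.card_coe_set_eq _
  rw [h2, h1, Set.ncard_insert_of_notMem (s := {x | P x}) ha, ← Nat.card_coe_set_eq]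
  rfl

lemma adj_fromRel (G : SimpleGraph V) (v₁ v₁' : V) (hne : v₁ ≠ v₁') (a b : V) :
    (SimpleGraph.fromRel (fun a b => G.Adj a b ∨ (a = v₁ ∧ b = v₁'))).Adj a b ↔
      G.Adj a b ∨ (a = v₁ ∧ b = v₁') ∨ (a = v₁' ∧ b = v₁) := by
  simp only [SimpleGraph.fromRel_adj]
  constructor
  · rintro ⟨hab, (h | h) | (h | h)⟩
    · exact Or.inl h
    · exact Or.inr (Or.inl h)
    · exact Or.inl (G.adj_symm h)
    · exact Or.inr (Or.inr ⟨h.2, h.1⟩)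
  · rintro (h | ⟨rfl, rfl⟩ | ⟨rfl, rfl⟩)
    · exact ⟨G.ne_of_adj h, Or.inl (Or.inl h)⟩
    · exact ⟨hne, Or.inl (Or.inr ⟨rfl, rfl⟩)⟩
    · exact ⟨hne.symm, Or.inr (Or.inr ⟨rfl, rfl⟩)⟩

lemma key_card [Fintype V] (G : SimpleGraph V) (v₁ v₁' : V) (hne : v₁ ≠ v₁')
    (hnadj : ¬ G.Adj v₁ v₁') (u : V) (P : V → Prop) :
    Nat.card {x : V // (SimpleGraph.fromRel
        (fun a b => G.Adj a b ∨ (a = v₁ ∧ b = v₁'))).Adj u x ∧ P x} =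
      Nat.card {x : V // G.Adj u x ∧ P x} +
        (if (u = v₁ ∧ P v₁') ∨ (u = v₁' ∧ P v₁) then 1 else 0) := by
  by_cases h1 : u = v₁
  · rw [h1]
    have hadj : ∀ x, (SimpleGraph.fromRel
        (fun a b => G.Adj a b ∨ (a = v₁ ∧ b = v₁'))).Adj v₁ x ↔ G.Adj v₁ x ∨ x = v₁' := by
      intro x
      rw [adj_fromRel G v₁ v₁' hne]
      constructor
      · rintro (h | ⟨_, rfl⟩ | ⟨h, _⟩)
        · exact Or.inl h
        · exact Or.inr rfl
        · exact absurd h hne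
      · rintro (h | rfl)
        · exact Or.inl h
        · exact Or.inr (Or.inl ⟨rfl, rfl⟩)
    by_cases hP : P v₁'
    · rw [if_pos (Or.inl ⟨rfl, hP⟩)]
      rw [crCard_congr (Q := fun x => (G.Adj v₁ x ∧ P x) ∨ x = v₁')
        (fun x => by
          rw [hadj x]
          constructor
          · rintro ⟨h | rfl, hp⟩
            · exact Or.inl ⟨h, hp⟩
            · exact Or.inr rfl
          · rintro (⟨h, hp⟩ | rfl)
            · exact ⟨Or.inl h, hp⟩
            · exact ⟨Or.inr rfl, hP⟩)]
      exact card_or_eq (fun h => hnadj h.1)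
    · rw [if_neg (by rintro (⟨_, h⟩ | ⟨h, _⟩); exact hP h; exact hne h)]
      rw [crCard_congr (Q := fun x => G.Adj v₁ x ∧ P x)
        (fun x => by
          rw [hadj x]
          constructor
          · rintro ⟨h | rfl, hp⟩
            · exact ⟨h, hp⟩
            · exact absurd hp hP
          · rintro ⟨h, hp⟩; exact ⟨Or.inl h, hp⟩)]
      exact (Nat.add_zero _).symm
  · by_cases h2 : u = v₁'
    · rw [h2]
      have hnadj' : ¬ G.Adj v₁' v₁ := fun h => hnadj (G.adj_symm h)
      have hadj : ∀ x, (SimpleGraph.fromRel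
          (fun a b => G.Adj a b ∨ (a = v₁ ∧ b = v₁'))).Adj v₁' x ↔ G.Adj v₁' x ∨ x = v₁ := by
        intro x
        rw [adj_fromRel G v₁ v₁' hne]
        constructor
        · rintro (h | ⟨h, _⟩ | ⟨_, rfl⟩)
          · exact Or.inl h
          · exact absurd h (Ne.symm hne)
          · exact Or.inr rfl
        · rintro (h | rfl)
          · exact Or.inl h
          · exact Or.inr (Or.inr ⟨rfl, rfl⟩)
      by_cases hP : P v₁
      · rw [if_pos (Or.inr ⟨rfl, hP⟩)]
        rw [crCard_congr (Q := fun x => (G.Adj v₁' x ∧ P x) ∨ x = v₁)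
          (fun x => by
            rw [hadj x]
            constructor
            · rintro ⟨h | rfl, hp⟩
              · exact Or.inl ⟨h, hp⟩
              · exact Or.inr rfl
            · rintro (⟨h, hp⟩ | rfl)
              · exact ⟨Or.inl h, hp⟩
              · exact ⟨Or.inr rfl, hP⟩)]
        exact card_or_eq (fun h => hnadj' h.1)
      · rw [if_neg (by rintro (⟨h, _⟩ | ⟨_, h⟩); exact (Ne.symm hne) h; exact hP h)]
        rw [crCard_congr (Q := fun x => G.Adj v₁' x ∧ P x)
          (fun x => by
            rw [hadj x]
            constructor
            · rintro ⟨h | rfl, hp⟩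
              · exact ⟨h, hp⟩
              · exact absurd hp hP
            · rintro ⟨h, hp⟩; exact ⟨Or.inl h, hp⟩)]
        exact (Nat.add_zero _).symm
    · rw [if_neg (by rintro (⟨h, _⟩ | ⟨h, _⟩); exact h1 h; exact h2 h)]
      rw [crCard_congr (Q := fun x => G.Adj u x ∧ P x)
        (fun x => by
          rw [adj_fromRel G v₁ v₁' hne]
          constructor
          · rintro ⟨h | ⟨rfl, _⟩ | ⟨rfl, _⟩, hp⟩
            · exact ⟨h, hp⟩
            · exact absurd rfl h1
            · exact absurd rfl h2
          · rintro ⟨h, hp⟩; exact ⟨Or.inl h, hp⟩)]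
      exact (Nat.add_zero _).symm

lemma crRel_eq [Fintype V] (G : SimpleGraph V) (v₁ v₁' : V) (hne : v₁ ≠ v₁')
    (hnadj : ¬ G.Adj v₁ v₁')
    (hdeg : Set.range (vdeg G) = ({1, 3} : Set ℕ))
    (hd1 : ∀ v, vdeg G v = 1 ↔ (v = v₁ ∨ v = v₁')) :
    ∀ i : ℕ, ∀ u v : V, crRel G i u v ↔
      crRel (SimpleGraph.fromRel (fun a b => G.Adj a b ∨ (a = v₁ ∧ b = v₁'))) i u v := by
  have hV : Nonempty V := by
    have h1 : (1:ℕ) ∈ Set.range (vdeg G) := by rw [hdeg]; exact Or.inl rfl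
    obtain ⟨v, -⟩ := h1
    exact ⟨v⟩
  obtain ⟨w₀⟩ := hV
  have hmem : ∀ v, vdeg G v = 1 ∨ vdeg G v = 3 := by
    intro v
    have h1 : vdeg G v ∈ Set.range (vdeg G) := Set.mem_range_self v
    rw [hdeg] at h1
    exact h1
  set G' := SimpleGraph.fromRel (fun a b => G.Adj a b ∨ (a = v₁ ∧ b = v₁')) with hG'
  intro i
  induction i with
  | zero => exact fun u v => ⟨fun _ => trivial, fun _ => trivial⟩
  | succ i IH =>
    intro u v
    have hcard : ∀ u w, Nat.card {x : V // G'.Adj u x ∧ crRel G' i x w} =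
        Nat.card {x : V // G.Adj u x ∧ crRel G i x w} +
          (if (u = v₁ ∧ crRel G i v₁' w) ∨ (u = v₁' ∧ crRel G i v₁ w) then 1 else 0) := by
      intro u w
      rw [crCard_congr (Q := fun x => G'.Adj u x ∧ crRel G i x w)
        (fun x => and_congr_right' (IH x w).symm)]
      exact key_card G v₁ v₁' hne hnadj u _
    -- deltas agree given same relation and same degree
    have key : ∀ a b : V, crRel G i a b → vdeg G a = vdeg G b → ∀ w : V,
        ((a = v₁ ∧ crRel G i v₁' w) ∨ (a = v₁' ∧ crRel G i v₁ w)) →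
        ((b = v₁ ∧ crRel G i v₁' w) ∨ (b = v₁' ∧ crRel G i v₁ w)) := by
      intro a b hab hvd w hC
      rcases hC with ⟨rfl, hw⟩ | ⟨rfl, hw⟩
      · have hb : vdeg G b = 1 := by rw [← hvd]; exact (hd1 _).mpr (Or.inl rfl)
        rcases (hd1 b).mp hb with rfl | rfl
        · exact Or.inl ⟨rfl, hw⟩
        · exact Or.inr ⟨rfl, crRel_trans G i hab hw⟩
      · have hb : vdeg G b = 1 := by rw [← hvd]; exact (hd1 _).mpr (Or.inr rfl)
        rcases (hd1 b).mp hb with rfl | rfl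
        · exact Or.inl ⟨rfl, crRel_trans G i hab hw⟩
        · exact Or.inr ⟨rfl, hw⟩
    have hdelta : crRel G i u v → vdeg G u = vdeg G v → ∀ w : V,
        (if (u = v₁ ∧ crRel G i v₁' w) ∨ (u = v₁' ∧ crRel G i v₁ w) then 1 else 0) =
        (if (v = v₁ ∧ crRel G i v₁' w) ∨ (v = v₁' ∧ crRel G i v₁ w) then 1 else 0) := by
      intro hR hvd w
      exact if_congr ⟨key u v hR hvd w, key v u (crRel_symm G i hR) hvd.symm w⟩ rfl rfl
    -- value of the corrected degree at level 0
    have hval : ∀ a : V, ∀ w : V, vdeg G a +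
        (if (a = v₁ ∧ crRel G 0 v₁' w) ∨ (a = v₁' ∧ crRel G 0 v₁ w) then 1 else 0) =
        if vdeg G a = 1 then 2 else 3 := by
      intro a w
      have hif : (if (a = v₁ ∧ crRel G 0 v₁' w) ∨ (a = v₁' ∧ crRel G 0 v₁ w) then 1 else 0) =
          if a = v₁ ∨ a = v₁' then 1 else 0 := by
        refine if_congr ⟨?_, ?_⟩ rfl rfl
        · rintro (⟨rfl, _⟩ | ⟨rfl, _⟩)
          · exact Or.inl rfl
          · exact Or.inr rfl
        · rintro (rfl | rfl)
          · exact Or.inl ⟨rfl, trivial⟩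
          · exact Or.inr ⟨rfl, trivial⟩
      rw [hif]
      rcases hmem a with h | h
      · rw [h, if_pos ((hd1 a).mp h), if_pos rfl]
      · rw [h, if_neg (fun hs => by rw [(hd1 a).mpr hs] at h; omega),
          if_neg (by omega)]
    -- degree equality from the relation hypotheses
    have hvdA : crRel G i u v →
        (∀ w, Nat.card {x : V // G.Adj u x ∧ crRel G i x w} =
          Nat.card {x : V // G.Adj v x ∧ crRel G i x w}) → vdeg G u = vdeg G v := by
      cases i with
      | zero =>
        intro _ h2
        have := h2 w₀
        rwa [card_adj_true, card_adj_true] at this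
      | succ j =>
        intro hR _
        exact vdeg_eq_of_crRel_one G ⟨w₀⟩ (crRel_one_of G j hR)
    have hvdB : crRel G i u v →
        (∀ w, Nat.card {x : V // G.Adj u x ∧ crRel G i x w} +
            (if (u = v₁ ∧ crRel G i v₁' w) ∨ (u = v₁' ∧ crRel G i v₁ w) then 1 else 0) =
          Nat.card {x : V // G.Adj v x ∧ crRel G i x w} +
            (if (v = v₁ ∧ crRel G i v₁' w) ∨ (v = v₁' ∧ crRel G i v₁ w) then 1 else 0)) →
        vdeg G u = vdeg G v := by
      cases i with
      | zero =>
        intro _ h2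
        have h := h2 w₀
        rw [card_adj_true, card_adj_true, hval u w₀, hval v w₀] at h
        rcases hmem u with hu | hu <;> rcases hmem v with hv | hv
        · rw [hu, hv]
        · rw [hu, hv, if_pos rfl, if_neg (by omega)] at h; omega
        · rw [hu, hv, if_neg (by omega), if_pos rfl] at h; omega
        · rw [hu, hv]
      | succ j =>
        intro hR _
        exact vdeg_eq_of_crRel_one G ⟨w₀⟩ (crRel_one_of G j hR)
    rw [crRel_succ, crRel_succ]
    constructor
    · rintro ⟨h1, h2⟩
      refine ⟨(IH u v).mp h1, fun w => ?_⟩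
      rw [hcard u w, hcard v w, h2 w, hdelta h1 (hvdA h1 h2) w]
    · rintro ⟨h1, h2⟩
      have h1' := (IH u v).mpr h1
      have h2' : ∀ w, Nat.card {x : V // G.Adj u x ∧ crRel G i x w} +
            (if (u = v₁ ∧ crRel G i v₁' w) ∨ (u = v₁' ∧ crRel G i v₁ w) then 1 else 0) =
          Nat.card {x : V // G.Adj v x ∧ crRel G i x w} +
            (if (v = v₁ ∧ crRel G i v₁' w) ∨ (v = v₁' ∧ crRel G i v₁ w) then 1 else 0) := by
        intro w
        rw [← hcard u w, ← hcard v w]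
        exact h2 w
      have hδ := hdelta h1' (hvdB h1' h2')
      refine ⟨h1', fun w => ?_⟩
      have h := h2' w
      rw [hδ w] at h
      omega

/-- Adding the edge between the two degree-1 vertices of a `{1,3}`-graph does not
change any Colour Refinement partition; in particular `G` is long-refinement iff
the augmented graph `G'` is, and `G'` has degree set `{2,3}` with exactly
`v₁, v₁'` of degree `2`. -/
theorem longRefinement_add_edge [Fintype V] (G : SimpleGraph V)
    (v₁ v₁' : V) (hne : v₁ ≠ v₁') (hnadj : ¬ G.Adj v₁ v₁')
    (hdeg : Set.range (vdeg G) = ({1, 3} : Set ℕ))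
    (hd1 : ∀ v, vdeg G v = 1 ↔ (v = v₁ ∨ v = v₁')) :
    (∀ i : ℕ, crPartition G i =
        crPartition (SimpleGraph.fromRel
          (fun a b => G.Adj a b ∨ (a = v₁ ∧ b = v₁'))) i) ∧
    (IsLongRefinement G ↔
      IsLongRefinement (SimpleGraph.fromRel
        (fun a b => G.Adj a b ∨ (a = v₁ ∧ b = v₁')))) ∧
    Set.range (vdeg (SimpleGraph.fromRel
        (fun a b => G.Adj a b ∨ (a = v₁ ∧ b = v₁')))) = ({2, 3} : Set ℕ) ∧
    ∀ v, vdeg (SimpleGraph.fromRel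
        (fun a b => G.Adj a b ∨ (a = v₁ ∧ b = v₁'))) v = 2 ↔
      (v = v₁ ∨ v = v₁') := by
  set G' := SimpleGraph.fromRel (fun a b => G.Adj a b ∨ (a = v₁ ∧ b = v₁')) with hG'
  have hrel := crRel_eq G v₁ v₁' hne hnadj hdeg hd1
  have hclass : ∀ i v, crClass G i v = crClass G' i v := fun i v =>
    Set.ext fun u => hrel i u v
  have hpart : ∀ i, crPartition G i = crPartition G' i := by
    intro i
    unfold crPartition
    ext C
    exact exists_congr fun v => by rw [hclass i v]
  have hmem : ∀ v, vdeg G v = 1 ∨ vdeg G v = 3 := by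
    intro v
    have h1 : vdeg G v ∈ Set.range (vdeg G) := Set.mem_range_self v
    rw [hdeg] at h1
    exact h1
  refine ⟨hpart, ?_, ?_, ?_⟩
  · constructor
    · rintro ⟨ha, hb⟩
      refine ⟨fun i hi => ?_, ?_⟩
      · rw [← hpart, ← hpart]; exact ha i hi
      · rw [← hpart, ← hpart]; exact hb
    · rintro ⟨ha, hb⟩
      refine ⟨fun i hi => ?_, ?_⟩
      · rw [hpart, hpart]; exact ha i hi
      · rw [hpart, hpart]; exact hb
  all_goals {
    have hvd : ∀ v, vdeg G' v = vdeg G v + (if v = v₁ ∨ v = v₁' then 1 else 0) := by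
      intro v
      have h1 : vdeg G' v = Nat.card {x : V // G'.Adj v x ∧ (fun _ => True) x} :=
        crCard_congr (fun x => ⟨fun h => ⟨h, trivial⟩, fun h => h.1⟩)
      rw [h1, key_card G v₁ v₁' hne hnadj v (fun _ => True),
        crCard_congr (Q := fun x => G.Adj v x)
          (fun x => ⟨fun h => h.1, fun h => ⟨h, trivial⟩⟩)]
      by_cases hs : v = v₁ ∨ v = v₁'
      · rw [if_pos hs, if_pos (by
          rcases hs with h | h
          · exact Or.inl ⟨h, trivial⟩
          · exact Or.inr ⟨h, trivial⟩)]
        rfl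
      · rw [if_neg hs, if_neg (by
          rintro (⟨h, _⟩ | ⟨h, _⟩)
          · exact hs (Or.inl h)
          · exact hs (Or.inr h))]
        rfl
    have hvd2 : ∀ v, (v = v₁ ∨ v = v₁') → vdeg G' v = 2 := by
      intro v hv
      rw [hvd v, if_pos hv, (hd1 v).mpr hv]
    have hvd3 : ∀ v, ¬(v = v₁ ∨ v = v₁') → vdeg G' v = 3 := by
      intro v hv
      rw [hvd v, if_neg hv]
      rcases hmem v with h | h
      · exact absurd ((hd1 v).mp h) hv
      · omega
    clear hvd
    first
    | · ext n
        simp only [Set.mem_range, Set.mem_insert_iff, Set.mem_singleton_iff]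
        constructor
        · rintro ⟨v, rfl⟩
          by_cases hv : v = v₁ ∨ v = v₁'
          · exact Or.inl (hvd2 v hv)
          · exact Or.inr (hvd3 v hv)
        · rintro (rfl | rfl)
          · exact ⟨v₁, hvd2 v₁ (Or.inl rfl)⟩
          · obtain ⟨v, hv⟩ : ∃ v, vdeg G v = 3 := by
              have h3 : (3:ℕ) ∈ Set.range (vdeg G) := by rw [hdeg]; exact Or.inr rfl
              exact h3
            refine ⟨v, hvd3 v ?_⟩
            intro hs
            rw [(hd1 v).mpr hs] at hv
            omega
    | · intro v
        constructor
        · intro h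
          by_contra hv
          rw [hvd3 v hv] at h
          omega
        · exact hvd2 v
  }
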